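/- Fix d ≥ 1, mesh steps Δx_1, …, Δx_d > 0, a time step Δt > 0 and w_∞ ≥ 0 satisfying the strict 1/2-CFL condition w_∞ Σ_{i=1}^d Δt/Δx_i < 1/2. Let (ρ_L)_{L∈ℤ^d} be a summable family of real numbers and let (a_L)_{L∈ℤ^d} be vectors in ℝ^d with |⟨a_L, e_i⟩| ≤ w_∞ for all L and i. Define ρ'_J := ρ_J − Σ_{i=1}^d (Δt/Δx_i)[((a_i)_J)⁺ ρ_J − ((a_i)_{J+e_i})⁻ ρ_{J+e_i} − ((a_i)_{J−e_i})⁺ ρ_{J−e_i} + ((a_i)_J)⁻ ρ_J], where (a_i)_L := ⟨a_L, e_i⟩. Then for every J ∈ ℤ^d, ρ'_J = Σ_{L∈ℤ^d} ρ_L α_J(x_L + Δt a_L). -/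
import Mathlib


open MeasureTheory Real Set
open scoped RealInnerProductSpace ENNReal

noncomputable section

/-- `ℝ^d` with the Euclidean structure. -/
abbrev Euc (d : ℕ) := EuclideanSpace ℝ (Fin d)

open Classical in
/-- `∇̂W`: the gradient of `W` away from `0`, and `0` at `0`. -/
def hatGrad {d : ℕ} (W : Euc d → ℝ) (x : Euc d) : Euc d :=
  if x = 0 then 0 else gradient W x

/-- Positive part `r⁺ = max(r,0)`. -/
def pos (r : ℝ) : ℝ := max r 0

/-- Negative part `r⁻ = max(-r,0)`. -/
def neg (r : ℝ) : ℝ := max (-r) 0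

/-- The node `x_J = (J_1 Δx_1, …, J_d Δx_d)`. -/
def node {d : ℕ} (Δx : Fin d → ℝ) (J : Fin d → ℤ) : Euc d :=
  (EuclideanSpace.equiv (Fin d) ℝ).symm (fun i => (J i : ℝ) * Δx i)

/-- The cell `C_J = Π_i [(J_i - 1/2)Δx_i, (J_i + 1/2)Δx_i)`. -/
def cell {d : ℕ} (Δx : Fin d → ℝ) (J : Fin d → ℤ) : Set (Euc d) :=
  {y | ∀ i, ((J i : ℝ) - 1/2) * Δx i ≤ y i ∧ y i < ((J i : ℝ) + 1/2) * Δx i}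

open Classical in
/-- The interpolation weight `α_J(y)`: since the cells `(C_L)` are pairwise disjoint, at most
one of the summands below is nonzero, and this agrees with the case-by-case definition:
`1 - Σ_i |⟨y - x_J, e_i⟩|/Δx_i` if `y ∈ C_J`; `(⟨y - x_{J∓e_i}, e_i⟩)^±/Δx_i` if
`y ∈ C_{J∓e_i}`; and `0` otherwise. -/
def interpWeight {d : ℕ} (Δx : Fin d → ℝ) (J : Fin d → ℤ) (y : Euc d) : ℝ :=
  (if y ∈ cell Δx J then 1 - ∑ i, |y i - node Δx J i| / Δx i else 0)
    + ∑ i : Fin d,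
      ((if y ∈ cell Δx (J - Pi.single i 1) then
          pos (y i - node Δx (J - Pi.single i 1) i) / Δx i else 0)
        + (if y ∈ cell Δx (J + Pi.single i 1) then
            neg (y i - node Δx (J + Pi.single i 1) i) / Δx i else 0))

lemma abs_eq_pos_add_neg (r : ℝ) : |r| = pos r + neg r := by
  rcases le_total 0 r with h | h
  · rw [abs_of_nonneg h]; unfold pos neg
    rw [max_eq_left h, max_eq_right (by linarith : -r ≤ 0)]; ring
  · rw [abs_of_nonpos h]; unfold pos neg
    rw [max_eq_right h, max_eq_left (by linarith : (0:ℝ) ≤ -r)]; ring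

lemma pos_mul_of_pos {t r : ℝ} (ht : 0 ≤ t) : pos (t * r) = t * pos r := by
  unfold pos; rw [mul_max_of_nonneg _ _ ht, mul_zero]

lemma neg_mul_of_pos {t r : ℝ} (ht : 0 ≤ t) : neg (t * r) = t * neg r := by
  unfold neg; rw [← mul_neg, mul_max_of_nonneg _ _ ht, mul_zero]

lemma mul_ite_zero' {α : Type*} (ρ : α → ℝ) (L c : α) (v : ℝ) [Decidable (L = c)] :
    ρ L * (if L = c then v else 0) = if L = c then ρ c * v else 0 := by
  split_ifs with h
  · subst h; rfl
  · rw [mul_zero]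

lemma summable_single {α : Type*} (c : α) (v : ℝ) [DecidablePred (· = c)] :
    Summable (fun L : α => if L = c then v else 0) :=
  summable_of_ne_finset_zero (s := {c}) (by intro b hb; simp at hb; simp [hb])

theorem stmt12' {d : ℕ} (hd : 1 ≤ d) (Δx : Fin d → ℝ) (hΔx : ∀ i, 0 < Δx i)
    (Δt : ℝ) (hΔt : 0 < Δt) (winf : ℝ) (hwinf : 0 ≤ winf)
    (hCFL : winf * ∑ i, Δt / Δx i < 1 / 2)
    (ρ : (Fin d → ℤ) → ℝ) (hρ : Summable ρ)
    (a : (Fin d → ℤ) → Euc d) (ha : ∀ L i, |a L i| ≤ winf)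
    (ρ' : (Fin d → ℤ) → ℝ)
    (hρ' : ∀ J, ρ' J = ρ J - ∑ i : Fin d, (Δt / Δx i) *
      (pos (a J i) * ρ J - neg (a (J + Pi.single i 1) i) * ρ (J + Pi.single i 1)
        - pos (a (J - Pi.single i 1) i) * ρ (J - Pi.single i 1) + neg (a J i) * ρ J)) :
    ∀ J : Fin d → ℤ,
      ρ' J = ∑' L : Fin d → ℤ, ρ L * interpWeight Δx J (node Δx L + Δt • a L) := by
  classical
  intro J
  set y : (Fin d → ℤ) → Euc d := fun L => node Δx L + Δt • a L with hy
  have hyi : ∀ L i, y L i = (L i : ℝ) * Δx i + Δt * a L i := fun L i => rfl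
  have hnode : ∀ (L : Fin d → ℤ) i, node Δx L i = (L i : ℝ) * Δx i := fun L i => rfl
  have hbound : ∀ (L : Fin d → ℤ) i, |Δt * a L i| < Δx i / 2 := by
    intro L i
    have h1 : winf * (Δt / Δx i) < 1/2 := by
      have hle : Δt / Δx i ≤ ∑ j, Δt / Δx j :=
        Finset.single_le_sum (f := fun j => Δt / Δx j)
          (fun j _ => le_of_lt (div_pos hΔt (hΔx j))) (Finset.mem_univ i)
      nlinarith [div_pos hΔt (hΔx i)]
    have h2 : |a L i| ≤ winf := ha L i
    have h3 : winf * Δt < Δx i / 2 := by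
      have hc := div_mul_cancel₀ Δt (ne_of_gt (hΔx i))
      nlinarith [hΔx i]
    rw [abs_mul, abs_of_pos hΔt]
    have h4 : 0 ≤ |a L i| := abs_nonneg _
    nlinarith
  have hmem : ∀ L K : Fin d → ℤ, y L ∈ cell Δx K ↔ K = L := by
    intro L K
    constructor
    · intro h
      funext i
      have hi := h i
      rw [hyi] at hi
      have hb := abs_lt.mp (hbound L i)
      have hx := hΔx i
      have h1 : (K i : ℝ) < (L i : ℝ) + 1 := by nlinarith [hi.1, hb.2]
      have h2 : (L i : ℝ) < (K i : ℝ) + 1 := by nlinarith [hi.2, hb.1]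
      have h1' : K i < L i + 1 := by exact_mod_cast h1
      have h2' : L i < K i + 1 := by exact_mod_cast h2
      omega
    · rintro rfl
      intro i
      rw [hyi]
      have hb := abs_lt.mp (hbound K i)
      have hx := hΔx i
      constructor <;> nlinarith [hb.1, hb.2]
  -- explicit formula for the weight
  have hw : ∀ L, ρ L * interpWeight Δx J (y L) =
      (if L = J then ρ J * (1 - ∑ i, Δt * |a J i| / Δx i) else 0)
      + ∑ i : Fin d,
        ((if L = J - Pi.single i 1 then
            ρ (J - Pi.single i 1) * (Δt * pos (a (J - Pi.single i 1) i) / Δx i) else 0)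
          + (if L = J + Pi.single i 1 then
              ρ (J + Pi.single i 1) * (Δt * neg (a (J + Pi.single i 1) i) / Δx i) else 0)) := by
    intro L
    have hstep : interpWeight Δx J (y L) =
        (if L = J then 1 - ∑ i, Δt * |a J i| / Δx i else 0)
        + ∑ i : Fin d,
          ((if L = J - Pi.single i 1 then Δt * pos (a (J - Pi.single i 1) i) / Δx i else 0)
            + (if L = J + Pi.single i 1 then Δt * neg (a (J + Pi.single i 1) i) / Δx i else 0)) := by
      unfold interpWeight
      congr 1
      · by_cases h : L = J
        · subst h
          rw [if_pos ((hmem L L).mpr rfl), if_pos rfl]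
          congr 1
          apply Finset.sum_congr rfl
          intro i _
          rw [hyi, hnode]
          rw [show (L i : ℝ) * Δx i + Δt * a L i - (L i : ℝ) * Δx i = Δt * a L i by ring,
            abs_mul, abs_of_pos hΔt]
        · rw [if_neg (fun hc => h ((hmem L J).mp hc).symm), if_neg h]
      · apply Finset.sum_congr rfl
        intro i _
        congr 1
        · by_cases h : L = J - Pi.single i 1
          · rw [if_pos ((hmem L _).mpr h.symm), if_pos h, ← h, hyi, hnode]
            rw [show (L i : ℝ) * Δx i + Δt * a L i - (L i : ℝ) * Δx i = Δt * a L i by ring,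
              pos_mul_of_pos hΔt.le, h]
          · rw [if_neg (fun hc => h ((hmem L _).mp hc).symm), if_neg h]
        · by_cases h : L = J + Pi.single i 1
          · rw [if_pos ((hmem L _).mpr h.symm), if_pos h, ← h, hyi, hnode]
            rw [show (L i : ℝ) * Δx i + Δt * a L i - (L i : ℝ) * Δx i = Δt * a L i by ring,
              neg_mul_of_pos hΔt.le, h]
          · rw [if_neg (fun hc => h ((hmem L _).mp hc).symm), if_neg h]
    rw [hstep, mul_add, Finset.mul_sum]
    congr 1
    · exact mul_ite_zero' ρ L J _
    · apply Finset.sum_congr rfl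
      intro i _
      rw [mul_add]
      congr 1
      · exact mul_ite_zero' ρ L _ _
      · exact mul_ite_zero' ρ L _ _
  -- compute the tsum
  have hts : ∑' L, ρ L * interpWeight Δx J (y L) =
      ρ J * (1 - ∑ i, Δt * |a J i| / Δx i)
      + ∑ i : Fin d,
        (ρ (J - Pi.single i 1) * (Δt * pos (a (J - Pi.single i 1) i) / Δx i)
          + ρ (J + Pi.single i 1) * (Δt * neg (a (J + Pi.single i 1) i) / Δx i)) := by
    rw [tsum_congr hw]
    rw [Summable.tsum_add (summable_single _ _)
      (summable_sum (fun i _ => (summable_single _ _).add (summable_single _ _)))]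
    rw [tsum_ite_eq]
    congr 1
    rw [Summable.tsum_finsetSum (fun i _ => (summable_single _ _).add (summable_single _ _))]
    apply Finset.sum_congr rfl
    intro i _
    rw [Summable.tsum_add (summable_single _ _) (summable_single _ _), tsum_ite_eq, tsum_ite_eq]
  rw [hts, hρ' J]
  -- final algebra
  have hsum : ∑ i : Fin d, (Δt / Δx i) *
      (pos (a J i) * ρ J - neg (a (J + Pi.single i 1) i) * ρ (J + Pi.single i 1)
        - pos (a (J - Pi.single i 1) i) * ρ (J - Pi.single i 1) + neg (a J i) * ρ J)
      = ∑ i : Fin d, (ρ J * (Δt * |a J i| / Δx i)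
        - (ρ (J - Pi.single i 1) * (Δt * pos (a (J - Pi.single i 1) i) / Δx i)
          + ρ (J + Pi.single i 1) * (Δt * neg (a (J + Pi.single i 1) i) / Δx i))) := by
    apply Finset.sum_congr rfl
    intro i _
    rw [abs_eq_pos_add_neg]
    ring
  rw [hsum, Finset.sum_sub_distrib, mul_sub, mul_one, Finset.mul_sum]
  ring

/-- The upwind scheme rewrites through the interpolation weights:
`ρ'_J = Σ_L ρ_L α_J(x_L + Δt a_L)`. -/
theorem stmt12 {d : ℕ} (hd : 1 ≤ d) (Δx : Fin d → ℝ) (hΔx : ∀ i, 0 < Δx i)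
    (Δt : ℝ) (hΔt : 0 < Δt) (winf : ℝ) (hwinf : 0 ≤ winf)
    (hCFL : winf * ∑ i, Δt / Δx i < 1 / 2)
    (ρ : (Fin d → ℤ) → ℝ) (hρ : Summable ρ)
    (a : (Fin d → ℤ) → Euc d) (ha : ∀ L i, |a L i| ≤ winf)
    (ρ' : (Fin d → ℤ) → ℝ)
    (hρ' : ∀ J, ρ' J = ρ J - ∑ i : Fin d, (Δt / Δx i) *
      (pos (a J i) * ρ J - neg (a (J + Pi.single i 1) i) * ρ (J + Pi.single i 1)
        - pos (a (J - Pi.single i 1) i) * ρ (J - Pi.single i 1) + neg (a J i) * ρ J)) :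
    ∀ J : Fin d → ℤ,
      ρ' J = ∑' L : Fin d → ℤ, ρ L * interpWeight Δx J (node Δx L + Δt • a L) :=
  stmt12' hd Δx hΔx Δt hΔt winf hwinf hCFL ρ hρ a ha ρ' hρ'
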